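/- Consider the region swap game with n = 3, k = 5, move vectors s1 = (1,1,0), s2 = (1,0,1), s3 = (0,1,1), f1 = (1,1,1), f2 = (1,1,1) in (ZMod 2)^3, and winning set W = {v ∈ (ZMod 2)^3 : exactly two coordinates of v equal 1}. Then for every initial state V0 ∈ W, Player C moving first has a winning strategy. -/
import Mathlib


/-- Winning positions for Player C in the region swap game with move vectors
`r : Fin k → Fin n → ZMod 2` and winning set `W`.  The first argument is the number of
turns remaining, `used` is the set of indices already selected, the next argument is the
current state, and the `Bool` records whether it is Player C's turn to move
(`true` = C to move).  On each turn the player to move selects an unused index `i`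
together with a value `ε : ZMod 2`, changing the state by `ε • r i`.  When no turns
remain, Player C has won exactly if the final state lies in `W`. -/
def CWins {k n : ℕ} (r : Fin k → Fin n → ZMod 2) (W : Set (Fin n → ZMod 2)) :
    ℕ → Finset (Fin k) → (Fin n → ZMod 2) → Bool → Prop
  | 0, _, v, _ => v ∈ W
  | m + 1, used, v, true => ∃ i : Fin k, i ∉ used ∧ ∃ ε : ZMod 2,
      CWins r W m (insert i used) (v + ε • r i) false
  | m + 1, used, v, false => ∀ i : Fin k, i ∉ used → ∀ ε : ZMod 2,
      CWins r W m (insert i used) (v + ε • r i) true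

/-- The five region move vectors of the trefoil game board: the three vertex-star
vectors `s1, s2, s3` and the two face vectors `f1 = f2 = (1,1,1)`. -/
def trefoilMoves : Fin 5 → Fin 3 → ZMod 2 :=
  ![![1, 1, 0], ![1, 0, 1], ![0, 1, 1], ![1, 1, 1], ![1, 1, 1]]

/-- Connected states for the trefoil board: exactly two coordinates equal `1`. -/
def trefoilW : Set (Fin 3 → ZMod 2) :=
  {v | (Finset.univ.filter fun i => v i = 1).card = 2}


instance trefoilW.dec : DecidablePred (· ∈ trefoilW) := fun v =>
  inferInstanceAs (Decidable ((Finset.univ.filter fun i => v i = 1).card = 2))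

instance CWins.dec {k n : ℕ} (r : Fin k → Fin n → ZMod 2) (W : Set (Fin n → ZMod 2))
    [DecidablePred (· ∈ W)] :
    ∀ (m : ℕ) (used : Finset (Fin k)) (v : Fin n → ZMod 2) (b : Bool),
      Decidable (CWins r W m used v b)
  | 0, _, v, _ => inferInstanceAs (Decidable (v ∈ W))
  | m + 1, used, v, true =>
      haveI : ∀ u w b, Decidable (CWins r W m u w b) := CWins.dec r W m
      inferInstanceAs (Decidable (∃ i : Fin k, i ∉ used ∧ ∃ ε : ZMod 2,
        CWins r W m (insert i used) (v + ε • r i) false))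
  | m + 1, used, v, false =>
      haveI : ∀ u w b, Decidable (CWins r W m u w b) := CWins.dec r W m
      inferInstanceAs (Decidable (∀ i : Fin k, i ∉ used → ∀ ε : ZMod 2,
        CWins r W m (insert i used) (v + ε • r i) true))

/-- On the trefoil game board, for every connected initial state, Player C moving first
has a winning strategy in the region swap game. -/
theorem stmt_4 : ∀ V0 ∈ trefoilW, CWins trefoilMoves trefoilW 5 ∅ V0 true := by
  decide
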